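/- Let α ∈ (0,1), c > 0, κ > 0. Then K_α is integrable on ℝ and ∫_ℝ K_α(ξ) dξ = 0. Moreover ∫_{-∞}^0 |K_α(ξ)| dξ = (cκ)^α/(2κ²). -/

import Mathlib

open Real MeasureTheory Filter Topology

/-- The kernel K₀(ξ) = e^{-κ|ξ|}/(2κ). -/
noncomputable def K0 (κ ξ : ℝ) : ℝ := Real.exp (-κ * |ξ|) / (2 * κ)

/-- The (a.e.) derivative of K₀: K₀'(x) = -sign(x) e^{-κ|x|}/2. -/
noncomputable def K0d (κ x : ℝ) : ℝ := -Real.sign x * Real.exp (-κ * |x|) / 2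

/-- The kernel K_α(ξ) = -(c^α/Γ(1-α)) ∫₀^∞ K₀'(ξ-s) s^{-α} ds. -/
noncomputable def Kalpha (α c κ ξ : ℝ) : ℝ :=
  -(c ^ α / Real.Gamma (1 - α)) * ∫ s in Set.Ioi (0 : ℝ), K0d κ (ξ - s) / s ^ α

/-- Convolution (K * g)(ξ) = ∫ K(ξ-y) g(y) dy. -/
noncomputable def conv (K g : ℝ → ℝ) (ξ : ℝ) : ℝ := ∫ y, K (ξ - y) * g y

section Helpers

open Set

variable {α c κ : ℝ}

lemma exp_sub_exp_le {a b : ℝ} (h : b ≤ a) : Real.exp a - Real.exp b ≤ (a - b) * Real.exp a := by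
  have h1 := Real.add_one_le_exp (b - a)
  have e : Real.exp b = Real.exp a * Real.exp (b - a) := by rw [← Real.exp_add]; ring_nf
  nlinarith [Real.exp_pos a]

lemma exp_lip_nonpos {a b : ℝ} (ha : a ≤ 0) (hb : b ≤ 0) :
    |Real.exp a - Real.exp b| ≤ |a - b| := by
  rcases le_total b a with h | h
  · rw [abs_of_nonneg (by simpa using Real.exp_le_exp.2 h), abs_of_nonneg (by linarith)]
    have := exp_sub_exp_le h
    nlinarith [Real.exp_le_one_iff.2 ha]
  · rw [abs_of_nonpos (by simpa using Real.exp_le_exp.2 h), abs_of_nonpos (by linarith)]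
    have := exp_sub_exp_le h
    nlinarith [Real.exp_le_one_iff.2 hb]

lemma exp_neg_lip {A B m : ℝ} (hA : m ≤ A) (hB : m ≤ B) :
    |Real.exp (-A) - Real.exp (-B)| ≤ |A - B| * Real.exp (-m) := by
  rcases le_total A B with h | h
  · rw [abs_of_nonneg (by simpa using Real.exp_le_exp.2 (by linarith : -B ≤ -A)),
      abs_of_nonpos (by linarith)]
    have := exp_sub_exp_le (by linarith : -B ≤ -A)
    nlinarith [Real.exp_le_exp.2 (by linarith : -A ≤ -m), Real.exp_pos (-A)]
  · rw [abs_of_nonpos (by simpa using Real.exp_le_exp.2 (by linarith : -A ≤ -B)),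
      abs_of_nonneg (by linarith)]
    have := exp_sub_exp_le (by linarith : -A ≤ -B)
    nlinarith [Real.exp_le_exp.2 (by linarith : -B ≤ -m), Real.exp_pos (-B)]

lemma K0_nonneg (hκ : 0 < κ) (x : ℝ) : 0 ≤ K0 κ x := by unfold K0; positivity

lemma K0_le (hκ : 0 < κ) (x : ℝ) : K0 κ x ≤ 1 / (2 * κ) := by
  unfold K0
  gcongr
  exact Real.exp_le_one_iff.2 (by nlinarith [abs_nonneg x])

lemma K0_continuous (κ : ℝ) : Continuous (K0 κ) := by unfold K0; fun_prop

lemma K0_lip (hκ : 0 < κ) (x y : ℝ) : |K0 κ x - K0 κ y| ≤ |x - y| / 2 := by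
  unfold K0
  rw [div_sub_div_same, abs_div, abs_of_pos (by linarith : (0:ℝ) < 2 * κ),
    div_le_div_iff₀ (by linarith) (by norm_num : (0:ℝ) < 2)]
  have h1 : |Real.exp (-κ * |x|) - Real.exp (-κ * |y|)| ≤ |(-κ * |x|) - (-κ * |y|)| :=
    exp_lip_nonpos (by nlinarith [abs_nonneg x]) (by nlinarith [abs_nonneg y])
  have h2 : |(-κ * |x|) - (-κ * |y|)| = κ * |(|x| - |y|)| := by
    rw [show (-κ * |x|) - (-κ * |y|) = -(κ * (|x| - |y|)) by ring, abs_neg, abs_mul,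
      abs_of_pos hκ]
  have h3 : |(|x| - |y|)| ≤ |x - y| := abs_abs_sub_abs_le_abs_sub x y
  nlinarith

lemma K0_sub_bound (hκ : 0 < κ) (x s : ℝ) (hs : 0 ≤ s) :
    |K0 κ (x - s) - K0 κ x| ≤ s / 2 * Real.exp (κ * s) * Real.exp (-κ * |x|) := by
  unfold K0
  rw [div_sub_div_same, abs_div, abs_of_pos (by linarith : (0:ℝ) < 2 * κ),
    div_le_iff₀ (by linarith)]
  have habs : |x| - s ≤ |x - s| := by
    have := abs_sub_abs_le_abs_sub x (x - s)
    have : |x| - |x - s| ≤ s := by simpa [abs_of_nonneg hs] using this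
    linarith
  have h1 : |Real.exp (-κ * |x - s|) - Real.exp (-κ * |x|)| ≤
      abs (κ * |x - s| - κ * |x|) * Real.exp (-(κ * (|x| - s))) := by
    have := exp_neg_lip (A := κ * |x - s|) (B := κ * |x|) (m := κ * (|x| - s))
      (by nlinarith) (by nlinarith)
    simpa [neg_mul] using this
  have h2 : abs (κ * |x - s| - κ * |x|) ≤ κ * s := by
    rw [show κ * |x - s| - κ * |x| = κ * (|x - s| - |x|) by ring, abs_mul, abs_of_pos hκ]
    have h4 : |(|x - s| - |x|)| ≤ |x - s - x| := abs_abs_sub_abs_le_abs_sub _ _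
    have h5 : |(|x - s| - |x|)| ≤ s := by simpa [abs_of_nonneg hs] using h4
    nlinarith
  have h3 : Real.exp (-(κ * (|x| - s))) = Real.exp (κ * s) * Real.exp (-κ * |x|) := by
    rw [← Real.exp_add]; ring_nf
  calc |Real.exp (-κ * |x - s|) - Real.exp (-κ * |x|)|
      ≤ abs (κ * |x - s| - κ * |x|) * Real.exp (-(κ * (|x| - s))) := h1
    _ ≤ κ * s * Real.exp (-(κ * (|x| - s))) :=
        mul_le_mul_of_nonneg_right h2 (Real.exp_pos _).le
    _ = s / 2 * Real.exp (κ * s) * Real.exp (-κ * |x|) * (2 * κ) := by rw [h3]; ring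

lemma exp_abs_integrable (hκ : 0 < κ) : Integrable (fun x : ℝ => Real.exp (-κ * |x|)) := by
  have hIoi : IntegrableOn (fun x : ℝ => Real.exp (-κ * |x|)) (Ioi 0) := by
    refine (exp_neg_integrableOn_Ioi 0 hκ).congr_fun (fun x hx => ?_) measurableSet_Ioi
    rw [abs_of_pos hx]
  have hIic : IntegrableOn (fun x : ℝ => Real.exp (-κ * |x|)) (Iic 0) := by
    rw [← Measure.map_neg_eq_self (volume : Measure ℝ)]
    have m : MeasurableEmbedding fun x : ℝ => -x := (Homeomorph.neg ℝ).measurableEmbedding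
    rw [m.integrableOn_map_iff]
    simp_rw [Function.comp_def, abs_neg, neg_preimage, neg_Iic, neg_zero]
    exact (integrableOn_Ici_iff_integrableOn_Ioi).mpr hIoi
  rw [← integrableOn_univ, ← Iic_union_Ioi (a := (0:ℝ))]
  exact hIic.union hIoi

lemma K0_integrable (hκ : 0 < κ) : Integrable (K0 κ) := by
  unfold K0
  simpa [div_eq_mul_inv] using (exp_abs_integrable hκ).mul_const (2 * κ)⁻¹

lemma K0d_abs_le (κ x : ℝ) : |K0d κ x| ≤ Real.exp (-κ * |x|) / 2 := by
  unfold K0d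
  rw [abs_div, abs_of_pos (by norm_num : (0:ℝ) < 2), abs_mul]
  have h1 : |(-Real.sign x)| ≤ 1 := by
    rw [abs_neg]
    rcases Real.sign_apply_eq x with h | h | h <;> simp [h]
  have h2 : |Real.exp (-κ * |x|)| = Real.exp (-κ * |x|) := abs_of_pos (Real.exp_pos _)
  rw [h2]
  have := Real.exp_pos (-κ * |x|)
  gcongr
  nlinarith

lemma int_rpow_Ioc {r : ℝ} (hr : -1 < r) :
    IntegrableOn (fun s : ℝ => s ^ r) (Ioc (0:ℝ) 1) := by
  have := intervalIntegral.intervalIntegrable_rpow' (a := 0) (b := 1) hr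
  rwa [intervalIntegrable_iff_integrableOn_Ioc_of_le (by norm_num)] at this

lemma measurable_Rsign : Measurable Real.sign := by
  unfold Real.sign
  exact Measurable.ite (measurableSet_lt measurable_id measurable_const)
    measurable_const
    (Measurable.ite (measurableSet_lt measurable_const measurable_id)
      measurable_const measurable_const)

lemma K0d_measurable (κ : ℝ) : Measurable (K0d κ) := by
  unfold K0d
  exact ((measurable_Rsign.neg).mul
    ((Real.continuous_exp.comp (continuous_const.mul continuous_abs)).measurable)).div_const 2

lemma contOn_rpow {r : ℝ} {s : Set ℝ} (h : ∀ x ∈ s, x ≠ (0:ℝ)) :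
    ContinuousOn (fun x : ℝ => x ^ r) s := fun x hx =>
  (Real.continuousAt_rpow_const x r (Or.inl (h x hx))).continuousWithinAt

lemma int_rpow_exp (hα : 0 < α) (hα1 : α < 1) (hκ : 0 < κ) :
    IntegrableOn (fun s : ℝ => s ^ (-α) * Real.exp (-(κ * s))) (Ioi 0) := by
  have hm : ∀ (t : Set ℝ), MeasurableSet t → (∀ x ∈ t, x ≠ (0:ℝ)) →
      AEStronglyMeasurable (fun s : ℝ => s ^ (-α) * Real.exp (-(κ * s))) (volume.restrict t) := by
    intro t ht h0
    exact ((contOn_rpow h0).mul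
      ((Real.continuous_exp.comp (continuous_const.mul continuous_id).neg).continuousOn)).aestronglyMeasurable ht
  have h1 : IntegrableOn (fun s : ℝ => s ^ (-α) * Real.exp (-(κ * s))) (Ioc 0 1) := by
    refine (int_rpow_Ioc (r := -α) (by linarith)).mono'
      (hm _ measurableSet_Ioc (fun x hx => hx.1.ne')) ?_
    filter_upwards [ae_restrict_mem measurableSet_Ioc] with s hs
    rw [norm_mul, Real.norm_eq_abs, Real.norm_eq_abs,
      abs_of_pos (Real.rpow_pos_of_pos hs.1 _), abs_of_pos (Real.exp_pos _)]
    have he : Real.exp (-(κ * s)) ≤ 1 := Real.exp_le_one_iff.2 (by nlinarith [hs.1.le])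
    nlinarith [Real.rpow_pos_of_pos hs.1 (-α)]
  have h2 : IntegrableOn (fun s : ℝ => s ^ (-α) * Real.exp (-(κ * s))) (Ioi 1) := by
    refine (exp_neg_integrableOn_Ioi 1 hκ).mono'
      (hm _ measurableSet_Ioi (fun x hx => by
        have : (1:ℝ) < x := hx
        linarith)) ?_
    filter_upwards [ae_restrict_mem measurableSet_Ioi] with s hs
    have h0 : (0:ℝ) < s := lt_trans one_pos hs
    rw [norm_mul, Real.norm_eq_abs, Real.norm_eq_abs,
      abs_of_pos (Real.rpow_pos_of_pos h0 _), abs_of_pos (Real.exp_pos _)]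
    have hr : s ^ (-α) ≤ 1 := Real.rpow_le_one_of_one_le_of_nonpos hs.le (by linarith)
    have : Real.exp (-(κ * s)) = Real.exp (-κ * s) := by ring_nf
    rw [this]
    nlinarith [Real.exp_pos (-κ * s), Real.rpow_pos_of_pos h0 (-α)]
  have : Ioc (0:ℝ) 1 ∪ Ioi 1 = Ioi 0 := Ioc_union_Ioi_eq_Ioi (by norm_num)
  rw [← this]
  exact h1.union h2

lemma hasDerivAt_K0 (hκ : 0 < κ) {x : ℝ} (hx : x ≠ 0) : HasDerivAt (K0 κ) (K0d κ x) x := by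
  rcases hx.lt_or_gt with h | h
  · have hd : HasDerivAt (fun y : ℝ => Real.exp (κ * y) / (2 * κ))
        (Real.exp (κ * x) * κ / (2 * κ)) x := by
      simpa using (((hasDerivAt_id x).const_mul κ).exp).div_const (2 * κ)
    have hev : (fun y : ℝ => Real.exp (κ * y) / (2 * κ)) =ᶠ[𝓝 x] K0 κ := by
      filter_upwards [Iio_mem_nhds h] with y hy
      unfold K0
      rw [abs_of_neg hy]
      ring_nf
    have := hd.congr_of_eventuallyEq hev.symm
    refine this.congr_deriv ?_
    unfold K0d
    rw [Real.sign_of_neg h, abs_of_neg h]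
    field_simp
  · have hd : HasDerivAt (fun y : ℝ => Real.exp (-(κ * y)) / (2 * κ))
        (Real.exp (-(κ * x)) * -κ / (2 * κ)) x := by
      simpa using ((((hasDerivAt_id x).const_mul κ).neg).exp).div_const (2 * κ)
    have hev : (fun y : ℝ => Real.exp (-(κ * y)) / (2 * κ)) =ᶠ[𝓝 x] K0 κ := by
      filter_upwards [Ioi_mem_nhds h] with y hy
      unfold K0
      rw [abs_of_pos hy]
      ring_nf
    have := hd.congr_of_eventuallyEq hev.symm
    refine this.congr_deriv ?_
    unfold K0d
    rw [Real.sign_of_pos h, abs_of_pos h]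
    field_simp

lemma hasDerivAt_F (hκ : 0 < κ) (ξ : ℝ) {s : ℝ} (hs : 0 < s) (hne : ξ - s ≠ 0) :
    HasDerivAt (fun t => (K0 κ (ξ - t) - K0 κ ξ) * t ^ (-α))
      (-(K0d κ (ξ - s) * s ^ (-α)) - α * ((K0 κ (ξ - s) - K0 κ ξ) * s ^ (-α - 1))) s := by
  have h1 : HasDerivAt (fun t : ℝ => ξ - t) (-1) s := (hasDerivAt_id s).const_sub ξ
  have h2 : HasDerivAt (fun t => K0 κ (ξ - t) - K0 κ ξ) (K0d κ (ξ - s) * (-1)) s :=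
    (((hasDerivAt_K0 hκ hne).comp s h1)).sub_const _
  have h3 : HasDerivAt (fun t : ℝ => t ^ (-α)) (-α * s ^ (-α - 1)) s := by
    simpa using Real.hasDerivAt_rpow_const (x := s) (p := -α) (Or.inl hs.ne')
  have : HasDerivAt (fun t => (K0 κ (ξ - t) - K0 κ ξ) * t ^ (-α)) _ s := h2.mul h3
  convert this using 1
  ring

lemma intK0d (hα : 0 < α) (hα1 : α < 1) (hκ : 0 < κ) (ξ : ℝ) :
    IntegrableOn (fun s => K0d κ (ξ - s) * s ^ (-α)) (Ioi 0) := by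
  refine ((int_rpow_exp hα hα1 hκ).const_mul (Real.exp (κ * |ξ|) / 2)).mono' ?_ ?_
  · exact (((K0d_measurable κ).comp (measurable_const.sub measurable_id)).aestronglyMeasurable.mul
      ((contOn_rpow (fun x hx => ne_of_gt hx)).aestronglyMeasurable measurableSet_Ioi))
  · filter_upwards [ae_restrict_mem measurableSet_Ioi] with s hs
    have hs0 : (0:ℝ) < s := hs
    rw [norm_mul, Real.norm_eq_abs, Real.norm_eq_abs, abs_of_pos (Real.rpow_pos_of_pos hs0 _)]
    have hb := K0d_abs_le κ (ξ - s)
    have habs : s - |ξ| ≤ |ξ - s| := by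
      have := abs_sub_abs_le_abs_sub s (s - (ξ - s) - s + (ξ-s))
      have h' : |s| - |ξ| ≤ |s - ξ| := abs_sub_abs_le_abs_sub s ξ
      calc s - |ξ| = |s| - |ξ| := by rw [abs_of_pos hs0]
        _ ≤ |s - ξ| := h'
        _ = |ξ - s| := abs_sub_comm s ξ
    have hexp : Real.exp (-κ * |ξ - s|) ≤ Real.exp (κ * |ξ|) * Real.exp (-(κ * s)) := by
      rw [← Real.exp_add]
      exact Real.exp_le_exp.2 (by nlinarith)
    calc |K0d κ (ξ - s)| * s ^ (-α) ≤ (Real.exp (-κ * |ξ - s|) / 2) * s ^ (-α) := by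
          gcongr
      _ ≤ (Real.exp (κ * |ξ|) * Real.exp (-(κ * s)) / 2) * s ^ (-α) := by
          gcongr
      _ = Real.exp (κ * |ξ|) / 2 * (s ^ (-α) * Real.exp (-(κ * s))) := by ring

lemma intU (hα : 0 < α) (hα1 : α < 1) (hκ : 0 < κ) (ξ : ℝ) :
    IntegrableOn (fun s => (K0 κ (ξ - s) - K0 κ ξ) * s ^ (-α - 1)) (Ioi 0) := by
  have hmeas : ∀ (t : Set ℝ), MeasurableSet t → t ⊆ Ioi 0 →
      AEStronglyMeasurable (fun s => (K0 κ (ξ - s) - K0 κ ξ) * s ^ (-α - 1))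
        (volume.restrict t) := by
    intro t ht hsub
    refine ContinuousOn.aestronglyMeasurable ?_ ht
    exact ((((K0_continuous κ).comp (continuous_const.sub continuous_id)).sub
      continuous_const).continuousOn).mul (contOn_rpow (fun x hx => ne_of_gt (hsub hx)))
  have h1 : IntegrableOn (fun s => (K0 κ (ξ - s) - K0 κ ξ) * s ^ (-α - 1)) (Ioc 0 1) := by
    refine ((int_rpow_Ioc (r := -α) (by linarith)).const_mul (1/2 : ℝ)).mono'
      (hmeas _ measurableSet_Ioc (fun x hx => hx.1)) ?_
    filter_upwards [ae_restrict_mem measurableSet_Ioc] with s hs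
    have hs0 : (0:ℝ) < s := hs.1
    rw [norm_mul, Real.norm_eq_abs, Real.norm_eq_abs, abs_of_pos (Real.rpow_pos_of_pos hs0 _)]
    have hu : |K0 κ (ξ - s) - K0 κ ξ| ≤ s / 2 := by
      have := K0_lip hκ (ξ - s) ξ
      simpa [abs_of_pos hs0, abs_sub_comm] using this
    calc |K0 κ (ξ - s) - K0 κ ξ| * s ^ (-α - 1) ≤ (s / 2) * s ^ (-α - 1) := by
          gcongr
      _ = 1/2 * s ^ (-α) := by
          rw [show (-α : ℝ) = 1 + (-α - 1) by ring, Real.rpow_add hs0, Real.rpow_one]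
          ring
  have h2 : IntegrableOn (fun s => (K0 κ (ξ - s) - K0 κ ξ) * s ^ (-α - 1)) (Ioi 1) := by
    refine ((integrableOn_Ioi_rpow_of_lt (by linarith : -α - 1 < -1) one_pos).const_mul
      (1/κ : ℝ)).mono' (hmeas _ measurableSet_Ioi (fun x hx => mem_Ioi.mpr (lt_trans one_pos (mem_Ioi.mp hx)))) ?_
    filter_upwards [ae_restrict_mem measurableSet_Ioi] with s hs
    have hs0 : (0:ℝ) < s := lt_trans one_pos hs
    rw [norm_mul, Real.norm_eq_abs, Real.norm_eq_abs, abs_of_pos (Real.rpow_pos_of_pos hs0 _)]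
    have hu : |K0 κ (ξ - s) - K0 κ ξ| ≤ 1/κ := by
      have b1 := K0_le hκ (ξ - s); have b2 := K0_le hκ ξ
      have n1 := K0_nonneg hκ (ξ - s); have n2 := K0_nonneg hκ ξ
      have e : 1/κ = 2 * (1/(2*κ)) := by field_simp
      have hp : (0:ℝ) < 1/(2*κ) := by positivity
      rw [abs_le]
      constructor <;> linarith
    gcongr
  have hun : Ioc (0:ℝ) 1 ∪ Ioi 1 = Ioi 0 := Ioc_union_Ioi_eq_Ioi (by norm_num)
  rw [← hun]
  exact h1.union h2

lemma contF (hα : 0 < α) (hα1 : α < 1) (hκ : 0 < κ) (ξ : ℝ) :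
    ContinuousOn (fun s => (K0 κ (ξ - s) - K0 κ ξ) * s ^ (-α)) (Ici 0) := by
  intro s hs
  rcases eq_or_lt_of_le (mem_Ici.mp hs) with h | h
  · subst h
    have hF0 : (K0 κ (ξ - 0) - K0 κ ξ) * (0:ℝ) ^ (-α) = 0 := by
      norm_num
    unfold ContinuousWithinAt
    have hbeta : (fun s : ℝ => (K0 κ (ξ - s) - K0 κ ξ) * s ^ (-α)) 0 = 0 := by norm_num
    rw [hbeta]
    have hb : Tendsto (fun s : ℝ => s ^ (1 - α) / 2) (𝓝[Ici 0] 0) (𝓝 0) := by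
      have hc : ContinuousAt (fun s : ℝ => s ^ (1 - α)) 0 :=
        Real.continuousAt_rpow_const 0 (1 - α) (Or.inr (by linarith))
      have := (hc.div_const 2).continuousWithinAt (s := Ici 0)
      unfold ContinuousWithinAt at this
      simpa [Real.zero_rpow (by linarith : (1:ℝ) - α ≠ 0)] using this
    refine squeeze_zero_norm' ?_ hb
    filter_upwards [self_mem_nhdsWithin] with t ht
    rcases eq_or_lt_of_le (mem_Ici.mp ht) with h0 | h0
    · subst h0
      norm_num [Real.zero_rpow (by linarith : (1:ℝ) - α ≠ 0)]
    · rw [norm_mul, Real.norm_eq_abs, Real.norm_eq_abs,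
        abs_of_pos (Real.rpow_pos_of_pos h0 _)]
      have hu : |K0 κ (ξ - t) - K0 κ ξ| ≤ t / 2 := by
        have := K0_lip hκ (ξ - t) ξ
        simpa [abs_of_pos h0, abs_sub_comm] using this
      calc |K0 κ (ξ - t) - K0 κ ξ| * t ^ (-α) ≤ (t / 2) * t ^ (-α) := by gcongr
        _ = t ^ (1 - α) / 2 := by
            rw [show (1:ℝ) - α = 1 + (-α) by ring, Real.rpow_add h0, Real.rpow_one]
            ring
  · exact (((((K0_continuous κ).comp (continuous_const.sub continuous_id)).sub
      continuous_const).continuousAt).mul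
      (Real.continuousAt_rpow_const s (-α) (Or.inl h.ne'))).continuousWithinAt

lemma tendstoF (hα : 0 < α) (hκ : 0 < κ) (ξ : ℝ) :
    Tendsto (fun s => (K0 κ (ξ - s) - K0 κ ξ) * s ^ (-α)) atTop (𝓝 0) := by
  have hb : Tendsto (fun s : ℝ => (1/κ) * s ^ (-α)) atTop (𝓝 0) := by
    have := (tendsto_rpow_neg_atTop hα).const_mul (1/κ : ℝ)
    simpa using this
  refine squeeze_zero_norm' ?_ hb
  filter_upwards [eventually_gt_atTop 0] with s hs
  rw [norm_mul, Real.norm_eq_abs, Real.norm_eq_abs, abs_of_pos (Real.rpow_pos_of_pos hs _)]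
  have hu : |K0 κ (ξ - s) - K0 κ ξ| ≤ 1/κ := by
    have b1 := K0_le hκ (ξ - s); have b2 := K0_le hκ ξ
    have n1 := K0_nonneg hκ (ξ - s); have n2 := K0_nonneg hκ ξ
    have e : 1/κ = 2 * (1/(2*κ)) := by field_simp
    have hp : (0:ℝ) < 1/(2*κ) := by positivity
    rw [abs_le]
    constructor <;> linarith
  gcongr

lemma marchaud (hα : 0 < α) (hα1 : α < 1) (hκ : 0 < κ) (ξ : ℝ) :
    ∫ s in Ioi (0:ℝ), K0d κ (ξ - s) / s ^ α
      = -α * ∫ s in Ioi (0:ℝ), (K0 κ (ξ - s) - K0 κ ξ) * s ^ (-α - 1) := by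
  set F := fun s : ℝ => (K0 κ (ξ - s) - K0 κ ξ) * s ^ (-α) with hF
  set g := fun s : ℝ => -(K0d κ (ξ - s) * s ^ (-α))
      - α * ((K0 κ (ξ - s) - K0 κ ξ) * s ^ (-α - 1)) with hg
  have hgint : IntegrableOn g (Ioi 0) :=
    ((intK0d hα hα1 hκ ξ).neg).sub ((intU hα hα1 hκ ξ).const_mul α)
  have hF0 : F 0 = 0 := by simp [hF]
  have key : ∫ s in Ioi (0:ℝ), g s = 0 := by
    rcases le_or_gt ξ 0 with hξ | hξ
    · have := integral_Ioi_of_hasDerivAt_of_tendsto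
        (f := F) (f' := g) (a := 0) (m := 0)
        ((contF hα hα1 hκ ξ) 0 self_mem_Ici)
        (fun x hx => hasDerivAt_F hκ ξ hx (ne_of_lt (by
          have h0 : (0:ℝ) < x := hx
          linarith)))
        hgint (tendstoF hα hκ ξ)
      rw [this, hF0, sub_zero]
    · have hsplit : ∫ s in Ioi (0:ℝ), g s
          = (∫ s in Ioc (0:ℝ) ξ, g s) + ∫ s in Ioi ξ, g s := by
        rw [← setIntegral_union (Ioc_disjoint_Ioi le_rfl) measurableSet_Ioi
          (hgint.mono_set (fun x hx => hx.1)) (hgint.mono_set (fun x hx => lt_trans hξ hx)),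
          Ioc_union_Ioi_eq_Ioi hξ.le]
      have hIoc : ∫ s in Ioc (0:ℝ) ξ, g s = F ξ - F 0 := by
        rw [← intervalIntegral.integral_of_le hξ.le]
        refine intervalIntegral.integral_eq_sub_of_hasDeriv_right_of_le hξ.le
          ((contF hα hα1 hκ ξ).mono (by
            intro x hx
            exact hx.1)) ?_ ?_
        · intro x hx
          exact (hasDerivAt_F hκ ξ hx.1 (ne_of_gt (by
            have h0 : x < ξ := hx.2
            linarith))).hasDerivWithinAt
        · rw [intervalIntegrable_iff_integrableOn_Ioc_of_le hξ.le]
          exact hgint.mono_set (fun x hx => hx.1)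
      have hIoi : ∫ s in Ioi ξ, g s = 0 - F ξ := by
        refine integral_Ioi_of_hasDerivAt_of_tendsto
          (f := F) (f' := g) (a := ξ) (m := 0)
          (((contF hα hα1 hκ ξ) ξ (le_of_lt hξ)).mono (Ici_subset_Ici.mpr hξ.le)) ?_
          (hgint.mono_set (fun x hx => lt_trans hξ hx)) (tendstoF hα hκ ξ)
        intro x hx
        exact hasDerivAt_F hκ ξ (lt_trans hξ hx) (ne_of_lt (by
          have h0 : ξ < x := hx
          linarith))
      rw [hsplit, hIoc, hIoi, hF0]
      ring
  have hsub : ∫ s in Ioi (0:ℝ), g s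
      = (∫ s in Ioi (0:ℝ), -(K0d κ (ξ - s) * s ^ (-α)))
        - ∫ s in Ioi (0:ℝ), α * ((K0 κ (ξ - s) - K0 κ ξ) * s ^ (-α - 1)) :=
    integral_sub ((intK0d hα hα1 hκ ξ).neg) ((intU hα hα1 hκ ξ).const_mul α)
  have hdiv : ∫ s in Ioi (0:ℝ), K0d κ (ξ - s) / s ^ α
      = ∫ s in Ioi (0:ℝ), K0d κ (ξ - s) * s ^ (-α) := by
    refine setIntegral_congr_fun measurableSet_Ioi (fun s hs => ?_)
    rw [Real.rpow_neg (le_of_lt hs), div_eq_mul_inv]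
  rw [hdiv]
  have h1 : ∫ s in Ioi (0:ℝ), -(K0d κ (ξ - s) * s ^ (-α))
      = -∫ s in Ioi (0:ℝ), K0d κ (ξ - s) * s ^ (-α) := integral_neg _
  have h2 : ∫ s in Ioi (0:ℝ), α * ((K0 κ (ξ - s) - K0 κ ξ) * s ^ (-α - 1))
      = α * ∫ s in Ioi (0:ℝ), (K0 κ (ξ - s) - K0 κ ξ) * s ^ (-α - 1) :=
    integral_const_mul α _
  rw [hsub, h1, h2] at key
  linarith [key]

lemma Kalpha_neg_form (hα : 0 < α) (hα1 : α < 1) (hc : 0 < c) (hκ : 0 < κ)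
    {ξ : ℝ} (hξ : ξ ≤ 0) :
    Kalpha α c κ ξ = -((c * κ) ^ α / (2 * κ)) * Real.exp (κ * ξ) := by
  have hinner : ∫ s in Ioi (0:ℝ), K0d κ (ξ - s) / s ^ α
      = Real.exp (κ * ξ) / 2 * ((1/κ) ^ (1 - α) * Real.Gamma (1 - α)) := by
    have hcong : ∀ s ∈ Ioi (0:ℝ), K0d κ (ξ - s) / s ^ α
        = (Real.exp (κ * ξ) / 2) * (s ^ ((1 - α) - 1) * Real.exp (-(κ * s))) := by
      intro s hs
      have hs0 : (0:ℝ) < s := hs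
      have hneg : ξ - s < 0 := by linarith
      unfold K0d
      rw [Real.sign_of_neg hneg, abs_of_neg hneg,
        show ((1:ℝ) - α) - 1 = -α by ring, Real.rpow_neg hs0.le,
        show -κ * -(ξ - s) = κ * ξ + -(κ * s) by ring, Real.exp_add]
      have hsne : s ^ α ≠ 0 := ne_of_gt (Real.rpow_pos_of_pos hs0 α)
      field_simp
    rw [setIntegral_congr_fun measurableSet_Ioi hcong, integral_const_mul,
      integral_rpow_mul_exp_neg_mul_Ioi (by linarith) hκ]
  unfold Kalpha
  rw [hinner]
  have hΓ : Real.Gamma (1 - α) ≠ 0 := ne_of_gt (Real.Gamma_pos_of_pos (by linarith))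
  have h1 : ((1:ℝ)/κ) ^ (1 - α) = (κ ^ (1 - α))⁻¹ := by
    rw [one_div, ← Real.inv_rpow hκ.le]
  have h2 : (c * κ) ^ α = c ^ α * κ ^ α := Real.mul_rpow hc.le hκ.le
  have h4 : κ ^ α * κ ^ (1 - α) = κ := by
    rw [← Real.rpow_add hκ]; norm_num
  have hC : (0:ℝ) < κ ^ (1 - α) := Real.rpow_pos_of_pos hκ _
  have h5 : (κ ^ ((1:ℝ) - α))⁻¹ = κ ^ α / κ := by
    rw [eq_div_iff (ne_of_gt hκ), inv_mul_eq_iff_eq_mul₀ (ne_of_gt hC)]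
    rw [mul_comm]; exact h4.symm
  rw [h1, h2, h5]
  field_simp

lemma intIio (hκ : 0 < κ) : ∫ ξ in Iio (0:ℝ), Real.exp (κ * ξ) = 1/κ := by
  have hIic : ∫ ξ in Iic (0:ℝ), Real.exp (κ * ξ) = 1/κ := by
    have hint : IntegrableOn (fun ξ : ℝ => Real.exp (κ * ξ)) (Iic 0) := by
      refine ((exp_abs_integrable hκ).integrableOn).congr_fun (fun x hx => ?_) measurableSet_Iic
      simp only [abs_of_nonpos (mem_Iic.mp hx)]
      ring_nf
    have hderiv : ∀ x ∈ Iio (0:ℝ),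
        HasDerivAt (fun ξ : ℝ => Real.exp (κ * ξ) / κ) (Real.exp (κ * x)) x := by
      intro x _
      have h := (((hasDerivAt_id x).const_mul κ).exp).div_const κ
      simp only [id_eq, mul_one] at h
      refine h.congr_deriv ?_
      field_simp
    have htend : Tendsto (fun ξ : ℝ => Real.exp (κ * ξ) / κ) atBot (𝓝 0) := by
      have h1 : Tendsto (fun ξ : ℝ => κ * ξ) atBot atBot :=
        Tendsto.const_mul_atBot hκ tendsto_id
      have := (Real.tendsto_exp_atBot.comp h1).div_const κ
      simpa using this
    have := integral_Iic_of_hasDerivAt_of_tendsto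
      (f := fun ξ : ℝ => Real.exp (κ * ξ) / κ) (f' := fun ξ => Real.exp (κ * ξ)) (a := 0) (m := 0)
      (Continuous.continuousWithinAt (by fun_prop)) hderiv hint htend
    rw [this]
    norm_num
  rw [← hIic]
  exact setIntegral_congr_set Iio_ae_eq_Iic

lemma contOn_prod (κ r : ℝ) :
    ContinuousOn (fun p : ℝ × ℝ => (K0 κ (p.1 - p.2) - K0 κ p.1) * p.2 ^ r)
      {p : ℝ × ℝ | p.2 ≠ 0} := by
  intro p hp
  refine ContinuousAt.continuousWithinAt ?_
  exact ((((K0_continuous κ).comp (continuous_fst.sub continuous_snd)).continuousAt).sub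
    (((K0_continuous κ).comp continuous_fst).continuousAt)).mul
    ((Real.continuousAt_rpow_const p.2 r (Or.inl hp)).comp continuous_snd.continuousAt)

lemma contOn_prod' (κ r : ℝ) :
    ContinuousOn (fun p : ℝ × ℝ => K0 κ p.1 * p.2 ^ r) {p : ℝ × ℝ | p.2 ≠ 0} := by
  intro p hp
  refine ContinuousAt.continuousWithinAt ?_
  exact (((K0_continuous κ).comp continuous_fst).continuousAt).mul
    ((Real.continuousAt_rpow_const p.2 r (Or.inl hp)).comp continuous_snd.continuousAt)

lemma prodInt (hα : 0 < α) (hα1 : α < 1) (hκ : 0 < κ) :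
    Integrable (fun p : ℝ × ℝ => (K0 κ (p.1 - p.2) - K0 κ p.1) * p.2 ^ (-α - 1))
      (volume.prod (volume.restrict (Ioi 0))) := by
  have hrw : ∀ t : Set ℝ, (volume : Measure ℝ).prod (volume.restrict t)
      = ((volume : Measure ℝ).prod volume).restrict (univ ×ˢ t) := by
    intro t
    rw [← Measure.prod_restrict, Measure.restrict_univ]
  rw [hrw]
  have hsetun : (univ ×ˢ Ioi (0:ℝ) : Set (ℝ × ℝ))
      = univ ×ˢ Ioc (0:ℝ) 1 ∪ univ ×ˢ Ioi 1 := by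
    rw [← prod_union, Ioc_union_Ioi_eq_Ioi (by norm_num : (0:ℝ) ≤ 1)]
  rw [hsetun]
  have hmeas1 : MeasurableSet (univ ×ˢ Ioc (0:ℝ) 1 : Set (ℝ × ℝ)) :=
    MeasurableSet.univ.prod measurableSet_Ioc
  have hmeas2 : MeasurableSet (univ ×ˢ Ioi (1:ℝ) : Set (ℝ × ℝ)) :=
    MeasurableSet.univ.prod measurableSet_Ioi
  refine IntegrableOn.union ?_ ?_
  · -- on univ ×ˢ Ioc 0 1
    rw [IntegrableOn, ← hrw]
    have hbnd : Integrable
        (fun p : ℝ × ℝ => (Real.exp κ / 2 * Real.exp (-κ * |p.1|)) * p.2 ^ (-α))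
        (volume.prod (volume.restrict (Ioc 0 1))) :=
      Integrable.mul_prod ((exp_abs_integrable hκ).const_mul _) (int_rpow_Ioc (by linarith))
    refine hbnd.mono' ?_ ?_
    · rw [hrw]
      exact ((contOn_prod κ (-α - 1)).mono (fun p hp => ne_of_gt (hp.2.1))).aestronglyMeasurable
        hmeas1
    · rw [hrw]
      filter_upwards [ae_restrict_mem hmeas1] with p hp
      obtain ⟨-, hp2⟩ := hp
      have hs0 : (0:ℝ) < p.2 := hp2.1
      rw [norm_mul, Real.norm_eq_abs, Real.norm_eq_abs,
        abs_of_pos (Real.rpow_pos_of_pos hs0 _)]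
      have hu := K0_sub_bound hκ p.1 p.2 hs0.le
      calc |K0 κ (p.1 - p.2) - K0 κ p.1| * p.2 ^ (-α - 1)
          ≤ (p.2 / 2 * Real.exp (κ * p.2) * Real.exp (-κ * |p.1|)) * p.2 ^ (-α - 1) := by
            gcongr
        _ ≤ (p.2 / 2 * Real.exp (κ * 1) * Real.exp (-κ * |p.1|)) * p.2 ^ (-α - 1) := by
            gcongr
            exact hp2.2
        _ = Real.exp κ / 2 * Real.exp (-κ * |p.1|) * (p.2 * p.2 ^ (-α - 1)) := by
            rw [mul_one]; ring
        _ = Real.exp κ / 2 * Real.exp (-κ * |p.1|) * p.2 ^ (-α) := by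
            rw [show p.2 * p.2 ^ (-α - 1) = p.2 ^ (1:ℝ) * p.2 ^ (-α - 1) by rw [Real.rpow_one],
              ← Real.rpow_add hs0]
            norm_num
  · -- on univ ×ˢ Ioi 1
    rw [IntegrableOn, ← hrw]
    have hw : IntegrableOn (fun s : ℝ => s ^ (-α - 1)) (Ioi 1) :=
      integrableOn_Ioi_rpow_of_lt (by linarith) one_pos
    have hg2 : Integrable (fun p : ℝ × ℝ => K0 κ p.1 * p.2 ^ (-α - 1))
        (volume.prod (volume.restrict (Ioi 1))) :=
      Integrable.mul_prod (K0_integrable hκ) hw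
    have hg1 : Integrable (fun p : ℝ × ℝ => K0 κ (p.1 - p.2) * p.2 ^ (-α - 1))
        (volume.prod (volume.restrict (Ioi 1))) := by
      have hmp : MeasurePreserving (fun z : ℝ × ℝ => (z.1 - z.2, z.2))
          (volume.prod (volume.restrict (Ioi 1))) (volume.prod (volume.restrict (Ioi 1))) :=
        measurePreserving_sub_prod volume (volume.restrict (Ioi 1))
      have hAESM : AEStronglyMeasurable (fun p : ℝ × ℝ => K0 κ p.1 * p.2 ^ (-α - 1))
          (volume.prod (volume.restrict (Ioi 1))) := by
        rw [hrw]
        exact ((contOn_prod' κ (-α - 1)).mono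
          (fun p hp => ne_of_gt (lt_trans one_pos hp.2))).aestronglyMeasurable hmeas2
      exact (hmp.integrable_comp hAESM).2 hg2
    have := hg1.sub hg2
    refine this.congr ?_
    refine Eventually.of_forall (fun p => ?_)
    simp only [Pi.sub_apply]
    ring

lemma inner_int_zero (hα : 0 < α) (hα1 : α < 1) (hκ : 0 < κ) (s : ℝ) :
    ∫ ξ : ℝ, (K0 κ (ξ - s) - K0 κ ξ) * s ^ (-α - 1) = 0 := by
  rw [integral_mul_const]
  rw [integral_sub ((K0_integrable hκ).comp_sub_right s) (K0_integrable hκ)]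
  rw [integral_sub_right_eq_self (K0 κ) s]
  simp

end Helpers

section Main

open Set

/-- `K_α` is integrable with total integral zero, and
`∫_{-∞}^0 |K_α| = (cκ)^α/(2κ²)`. -/
theorem Kalpha_integrable_integral_zero
    (α c κ : ℝ) (hα : α ∈ Set.Ioo (0 : ℝ) 1) (hc : 0 < c) (hκ : 0 < κ) :
    Integrable (Kalpha α c κ) ∧ (∫ ξ, Kalpha α c κ ξ) = 0 ∧
      (∫ ξ in Set.Iio (0 : ℝ), |Kalpha α c κ ξ|) = (c * κ) ^ α / (2 * κ ^ 2) := by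
  obtain ⟨hα0, hα1⟩ := hα
  set G : ℝ → ℝ := fun ξ => ∫ s in Ioi (0:ℝ), (K0 κ (ξ - s) - K0 κ ξ) * s ^ (-α - 1) with hG
  have hKG : Kalpha α c κ = fun ξ => (c ^ α * α / Real.Gamma (1 - α)) * G ξ := by
    funext ξ
    unfold Kalpha
    rw [marchaud hα0 hα1 hκ ξ]
    ring
  have H := prodInt (κ := κ) hα0 hα1 hκ
  have hGint : Integrable G := by
    have := H.integral_prod_left
    exact this
  have hGzero : (∫ ξ, G ξ) = 0 := by
    have hswap := integral_integral_swap
      (f := fun ξ s => (K0 κ (ξ - s) - K0 κ ξ) * s ^ (-α - 1))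
      (μ := (volume : Measure ℝ)) (ν := volume.restrict (Ioi 0)) H
    rw [hG]
    rw [hswap]
    have : ∀ s : ℝ, (∫ ξ : ℝ, (K0 κ (ξ - s) - K0 κ ξ) * s ^ (-α - 1)) = 0 :=
      inner_int_zero hα0 hα1 hκ
    simp [this]
  refine ⟨?_, ?_, ?_⟩
  · rw [hKG]
    exact hGint.const_mul _
  · rw [hKG, integral_const_mul, hGzero, mul_zero]
  · have hC : (0:ℝ) < (c * κ) ^ α / (2 * κ) := by positivity
    have hcong : ∀ ξ ∈ Iio (0:ℝ), |Kalpha α c κ ξ|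
        = ((c * κ) ^ α / (2 * κ)) * Real.exp (κ * ξ) := by
      intro ξ hξ
      rw [Kalpha_neg_form hα0 hα1 hc hκ (le_of_lt hξ), neg_mul, abs_neg, abs_mul,
        abs_of_pos hC, abs_of_pos (Real.exp_pos _)]
    rw [setIntegral_congr_fun measurableSet_Iio hcong, integral_const_mul, intIio hκ]
    field_simp

end Main
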